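/- Let K be a field and let f, g ∈ K⟨x,y⟩ be two nonzero bihomogeneous polynomials (each homogeneous with respect to x and with respect to y separately). Then either f and g generate a free subalgebra of K⟨x,y⟩ (i.e., the algebra homomorphism from the free associative algebra K⟨u,v⟩ to K⟨x,y⟩ sending u ↦ f, v ↦ g is injective), or, up to multiplicative constants, both f and g are powers of one and the same bihomogeneous element of K⟨x,y⟩ (i.e., there exist a bihomogeneous w ∈ K⟨x,y⟩, scalars α, β ∈ K∖{0}, and integers k, l ≥ 0 with f = α·w^k and g = β·w^l). -/

import Mathlib

open MonoidAlgebra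

noncomputable section

/-- The free associative algebra `K⟨x,y⟩` (also serving as `K⟨u,v⟩`);
`x` is letter `0`, `y` is letter `1`. -/
abbrev FA2 (K : Type) [Field K] := MonoidAlgebra K (FreeMonoid (Fin 2))

variable (K : Type) [Field K]

/-- The generators `x = Xw 0`, `y = Xw 1`. -/
def Xw (i : Fin 2) : FA2 K := MonoidAlgebra.of K (FreeMonoid (Fin 2)) (FreeMonoid.of i)

/-- The algebra homomorphism `K⟨u,v⟩ → K⟨x,y⟩` sending `u ↦ f 0`, `v ↦ f 1`. -/
def subst2 (f : Fin 2 → FA2 K) : FA2 K →ₐ[K] FA2 K :=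
  MonoidAlgebra.lift K (FA2 K) (FreeMonoid (Fin 2)) (FreeMonoid.lift f)

/-- A polynomial of `K⟨x,y⟩` is bihomogeneous if all its monomials have the same number of
occurrences of `x` and the same number of occurrences of `y`. -/
def IsBihom (p : FA2 K) : Prop :=
  ∃ a b : ℕ, ∀ w ∈ p.coeff.support,
    (FreeMonoid.toList w).count 0 = a ∧ (FreeMonoid.toList w).count 1 = b

variable {K}

namespace BFP
abbrev W := FreeMonoid (Fin 2)

def lenW (z : W) : ℕ := (FreeMonoid.toList z).length
def takeW (m : ℕ) (z : W) : W := FreeMonoid.ofList ((FreeMonoid.toList z).take m)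
def dropW (m : ℕ) (z : W) : W := FreeMonoid.ofList ((FreeMonoid.toList z).drop m)

lemma takeW_mul_dropW (m : ℕ) (z : W) : takeW m z * dropW m z = z := by
  show FreeMonoid.ofList _ * FreeMonoid.ofList _ = z
  rw [← FreeMonoid.ofList_append, List.take_append_drop]
  rfl

lemma lenW_mul (a b : W) : lenW (a * b) = lenW a + lenW b := by
  simp [lenW, FreeMonoid.toList_mul]

lemma takeW_mul_of_len (a b : W) : takeW (lenW a) (a * b) = a := by
  show FreeMonoid.ofList (((a*b) : W).toList.take _) = a
  rw [FreeMonoid.toList_mul, List.take_left' (l₂ := FreeMonoid.toList b) (i := lenW a) rfl]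
  rfl

lemma dropW_mul_of_len (a b : W) : dropW (lenW a) (a * b) = b := by
  show FreeMonoid.ofList (((a*b) : W).toList.drop _) = b
  rw [FreeMonoid.toList_mul, List.drop_left' (l₂ := FreeMonoid.toList b) (i := lenW a) rfl]
  rfl

lemma lenW_takeW (m : ℕ) (z : W) (h : m ≤ lenW z) : lenW (takeW m z) = m := by
  unfold lenW at h ⊢
  simp only [takeW]
  show (List.take m (FreeMonoid.toList z)).length = m
  rw [List.length_take]
  omega

/-- Key coefficient formula for products in `FA2 K`. -/
lemma mul_apply_sum_take (p q : FA2 K) (z : W) :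
    (p * q).coeff z = ∑ j ∈ Finset.range (lenW z + 1), p.coeff (takeW j z) * q.coeff (dropW j z) := by
  classical
  have hinj : ∀ j₁ ∈ Finset.range (lenW z + 1), ∀ j₂ ∈ Finset.range (lenW z + 1),
      (fun j => ((takeW j z, dropW j z) : W × W)) j₁ = (fun j => ((takeW j z, dropW j z) : W × W)) j₂ → j₁ = j₂ := by
    intro j₁ h₁ j₂ h₂ h
    simp only [Finset.mem_range] at h₁ h₂
    have h' := congrArg (fun x => lenW x.1) h
    simp only at h'
    rw [lenW_takeW j₁ z (by omega), lenW_takeW j₂ z (by omega)] at h'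
    exact h'
  rw [mul_apply_antidiagonal p q z
    ((Finset.range (lenW z + 1)).image (fun j => (takeW j z, dropW j z)))]
  · rw [Finset.sum_image hinj]
  · intro pr
    constructor
    · intro h
      simp only [Finset.mem_image, Finset.mem_range] at h
      obtain ⟨j, hj, rfl⟩ := h
      exact takeW_mul_dropW j z
    · intro h
      simp only [Finset.mem_image, Finset.mem_range]
      refine ⟨lenW pr.1, ?_, ?_⟩
      · rw [← h, lenW_mul]; omega
      · rw [← h, takeW_mul_of_len, dropW_mul_of_len]

/-- If all words of `p` have length `m` and `z` is shorter, the product coefficient vanishes. -/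
lemma mul_apply_short (p q : FA2 K) (m : ℕ) (hp : ∀ a ∈ p.coeff.support, lenW a = m)
    (z : W) (hz : lenW z < m) : (p * q).coeff z = 0 := by
  rw [mul_apply_sum_take]
  apply Finset.sum_eq_zero
  intro j hj
  simp only [Finset.mem_range] at hj
  have : p.coeff (takeW j z) = 0 := by
    by_contra hne
    have := hp _ (Finsupp.mem_support_iff.mpr hne)
    rw [lenW_takeW j z (by omega)] at this
    omega
  rw [this, zero_mul]

/-- If all words of `p` have length `m ≤ lenW z`, the product coefficient splits. -/
lemma mul_apply_split (p q : FA2 K) (m : ℕ) (hp : ∀ a ∈ p.coeff.support, lenW a = m)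
    (z : W) (hz : m ≤ lenW z) : (p * q).coeff z = p.coeff (takeW m z) * q.coeff (dropW m z) := by
  rw [mul_apply_sum_take]
  rw [Finset.sum_eq_single m]
  · intro j hj hne
    have : p.coeff (takeW j z) = 0 := by
      by_contra h0
      have := hp _ (Finsupp.mem_support_iff.mpr h0)
      simp only [Finset.mem_range] at hj
      rw [lenW_takeW j z (by omega)] at this
      omega
    rw [this, zero_mul]
  · intro h
    exact absurd (Finset.mem_range.mpr (by omega)) h

lemma mul_apply_one' (p q : FA2 K) : (p * q).coeff 1 = p.coeff 1 * q.coeff 1 := by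
  have h : lenW (1 : W) = 0 := rfl
  rw [mul_apply_sum_take]
  rw [h]
  rw [Finset.sum_range_one]
  rfl


/-- Left transduction: coefficients of `p` after removing the prefix `w`. -/
def Ltr (w : W) (p : FA2 K) : FA2 K :=
  MonoidAlgebra.ofCoeff (Finsupp.comapDomain (w * ·) p.coeff (fun _ _ _ _ h => mul_left_cancel h))

@[simp] lemma Ltr_apply (w : W) (p : FA2 K) (u : W) : (Ltr w p).coeff u = p.coeff (w * u) :=
  rfl

lemma Ltr_support (w : W) (p : FA2 K) (u : W) (hu : u ∈ (Ltr w p).coeff.support) :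
    w * u ∈ p.coeff.support := by
  rw [Finsupp.mem_support_iff] at hu ⊢
  exact hu

end BFP


namespace BFP

lemma subst2_Xw (F : Fin 2 → FA2 K) (i : Fin 2) : subst2 K F (Xw K i) = F i := by
  simp [subst2, Xw, MonoidAlgebra.lift_of, FreeMonoid.lift_eval_of]

lemma Xw_eq_single (i : Fin 2) : Xw K i = MonoidAlgebra.single (FreeMonoid.of i) 1 := by
  simp [Xw, MonoidAlgebra.of_apply]

lemma algHom_ext2 {A : Type*} [Semiring A] [Algebra K A] {φ₁ φ₂ : FA2 K →ₐ[K] A}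
    (h0 : φ₁ (Xw K 0) = φ₂ (Xw K 0)) (h1 : φ₁ (Xw K 1) = φ₂ (Xw K 1)) : φ₁ = φ₂ := by
  refine MonoidAlgebra.algHom_ext ?_ (Subsingleton.elim _ _)
  intro w
  induction w using FreeMonoid.recOn with
  | one =>
      show φ₁ 1 = φ₂ 1
      simp
  | of_mul i t iht =>
      have : (MonoidAlgebra.single (FreeMonoid.of i * t) (1:K) : FA2 K)
          = MonoidAlgebra.single (FreeMonoid.of i) 1 * MonoidAlgebra.single t 1 := by
        rw [MonoidAlgebra.single_mul_single, one_mul]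
      rw [this, map_mul, map_mul, iht]
      congr 1
      rw [← Xw_eq_single]
      have : i = 0 ∨ i = 1 := by omega
      rcases this with rfl | rfl
      · exact h0
      · exact h1

end BFP



namespace BFP

lemma subst2_single_one (A B : W) (w : W) :
    subst2 K ![MonoidAlgebra.single A 1, MonoidAlgebra.single B 1]
      (MonoidAlgebra.single w 1) = MonoidAlgebra.single (FreeMonoid.lift ![A, B] w) 1 := by
  induction w using FreeMonoid.recOn with
  | one =>
      show subst2 K _ 1 = _
      rw [map_one]
      rfl
  | of_mul i t iht =>
      have h : (MonoidAlgebra.single (FreeMonoid.of i * t) (1:K) : FA2 K)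
          = MonoidAlgebra.single (FreeMonoid.of i) 1 * MonoidAlgebra.single t 1 := by
        rw [MonoidAlgebra.single_mul_single, one_mul]
      rw [h, map_mul, iht, ← Xw_eq_single, subst2_Xw, map_mul, FreeMonoid.lift_eval_of]
      have h2 : i = 0 ∨ i = 1 := by omega
      rcases h2 with rfl | rfl
      · show MonoidAlgebra.single A 1 * _ = MonoidAlgebra.single ((A : W) * _) 1
        rw [MonoidAlgebra.single_mul_single, one_mul]
      · show MonoidAlgebra.single B 1 * _ = MonoidAlgebra.single ((B : W) * _) 1
        rw [MonoidAlgebra.single_mul_single, one_mul]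

/-- `subst2` with monomial images is `Finsupp.mapDomain` along the corresponding
monoid homomorphism. -/
lemma subst2_single_words (A B : W) (P : FA2 K) :
    subst2 K ![MonoidAlgebra.single A 1, MonoidAlgebra.single B 1] P
      = MonoidAlgebra.mapDomain (FreeMonoid.lift ![A, B]) P := by
  classical
  induction P using MonoidAlgebra.induction with
  | zero => simp
  | single_add w γ P hw hγ ih =>
      rw [map_add, MonoidAlgebra.mapDomain_add, ih]
      congr 1
      rw [MonoidAlgebra.mapDomain_single]
      have h1 : (MonoidAlgebra.single w γ : FA2 K) = γ • MonoidAlgebra.single w 1 := by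
        rw [MonoidAlgebra.smul_single, smul_eq_mul, mul_one]
      rw [h1, map_smul, subst2_single_one, MonoidAlgebra.smul_single, smul_eq_mul, mul_one]

lemma subst2_single_words_injective (A B : W)
    (h : Function.Injective (FreeMonoid.lift ![A, B])) :
    Function.Injective (subst2 K ![MonoidAlgebra.single A 1, MonoidAlgebra.single B 1]) := by
  intro P Q hPQ
  rw [subst2_single_words, subst2_single_words] at hPQ
  exact MonoidAlgebra.mapDomain_injective h hPQ

end BFP

namespace BFP

def codeL : Fin 2 → List (Fin 2) := ![[0, 1], [0]]
def rcL : Fin 2 → List (Fin 2) := ![[1, 0], [0]]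

lemma rcL_injective : Function.Injective (fun l : List (Fin 2) => l.flatMap rcL) := by
  intro l₁
  induction l₁ with
  | nil =>
      intro l₂ h
      cases l₂ with
      | nil => rfl
      | cons j t =>
          exfalso
          simp only [List.flatMap_nil, List.flatMap_cons] at h
          have : j = 0 ∨ j = 1 := by omega
          rcases this with rfl | rfl <;> simp [rcL] at h
  | cons i t ih =>
      intro l₂ h
      cases l₂ with
      | nil =>
          exfalso
          simp only [List.flatMap_nil, List.flatMap_cons] at h
          have : i = 0 ∨ i = 1 := by omega
          rcases this with rfl | rfl <;> simp [rcL] at h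
      | cons j t₂ =>
          simp only [List.flatMap_cons] at h
          have hi : i = 0 ∨ i = 1 := by omega
          have hj : j = 0 ∨ j = 1 := by omega
          rcases hi with rfl | rfl <;> rcases hj with rfl | rfl <;>
            simp only [rcL, Matrix.cons_val_zero, Matrix.cons_val_one, Matrix.head_cons,
              List.cons_append, List.nil_append, List.cons.injEq] at h
          · rw [ih h.2.2]
          · exact absurd h.1 (by decide)
          · exact absurd h.1 (by decide)
          · rw [ih h.2]

lemma flatMap_code_rev (l : List (Fin 2)) :
    (l.flatMap codeL).reverse = l.reverse.flatMap rcL := by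
  induction l with
  | nil => simp
  | cons i t ih =>
      simp only [List.flatMap_cons, List.reverse_append, ih, List.reverse_cons,
        List.flatMap_append, List.flatMap_cons, List.flatMap_nil, List.append_nil]
      congr 1
      have : i = 0 ∨ i = 1 := by omega
      rcases this with rfl | rfl <;> rfl

lemma codeL_injective : Function.Injective (fun l : List (Fin 2) => l.flatMap codeL) := by
  intro l₁ l₂ h
  simp only at h
  have h2 : (l₁.flatMap codeL).reverse = (l₂.flatMap codeL).reverse := by rw [h]
  rw [flatMap_code_rev, flatMap_code_rev] at h2
  have := rcL_injective h2
  have h3 := congrArg List.reverse this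
  simpa using h3

/-- The monoid homomorphism `0 ↦ 01`, `1 ↦ 0` is injective. -/
lemma psi_injective :
    Function.Injective (FreeMonoid.lift ![FreeMonoid.of 0 * FreeMonoid.of 1,
      (FreeMonoid.of 0 : W)]) := by
  have key : ∀ l : List (Fin 2),
      FreeMonoid.toList (FreeMonoid.lift ![FreeMonoid.of 0 * FreeMonoid.of 1,
        (FreeMonoid.of 0 : W)] (FreeMonoid.ofList l)) = l.flatMap codeL := by
    intro l
    induction l with
    | nil => rfl
    | cons i t ih =>
        rw [List.flatMap_cons, ← ih]
        have : FreeMonoid.ofList (i :: t) = FreeMonoid.of i * FreeMonoid.ofList t := rfl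
        rw [this, map_mul, FreeMonoid.toList_mul, FreeMonoid.lift_eval_of]
        congr 1

  intro w₁ w₂ h
  have h2 : (FreeMonoid.toList w₁).flatMap codeL = (FreeMonoid.toList w₂).flatMap codeL := by
    rw [← key, ← key]
    congr 1
  exact codeL_injective h2

end BFP

namespace BFP

lemma single_of_ne_one (i : Fin 2) (t : W) : (1 : W) ≠ FreeMonoid.of i * t := by
  intro h
  have := congrArg lenW h
  rw [lenW_mul] at this
  have h1 : lenW (1 : W) = 0 := rfl
  have h2 : lenW (FreeMonoid.of i) = 1 := rfl
  omega

lemma supp_single_len (w : W) (γ : K) :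
    ∀ a ∈ (MonoidAlgebra.single w γ : FA2 K).coeff.support, lenW a = lenW w := by
  intro a ha
  have := Finsupp.support_single_subset ha
  simp only [Finset.mem_singleton] at this
  rw [this]

lemma of_ne_of {i j : Fin 2} (h : i ≠ j) : FreeMonoid.of i ≠ FreeMonoid.of j := by
  intro hh
  have h2 := congrArg FreeMonoid.toList hh
  rw [FreeMonoid.toList_of, FreeMonoid.toList_of] at h2
  injection h2 with h3 _
  exact h h3

lemma subst2_single_one_coeff (F : Fin 2 → FA2 K) (c : K) :
    subst2 K F (MonoidAlgebra.single (1:W) c) = MonoidAlgebra.single (1:W) c := by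
  have h : (MonoidAlgebra.single (1:W) c : FA2 K) = algebraMap K (FA2 K) c := rfl
  rw [h, AlgHom.commutes]

/-- Decomposition of an element of `FA2 K` by the first letter. -/
lemma decomp_first (P : FA2 K) :
    P = (MonoidAlgebra.single (1 : W) (P.coeff 1) : FA2 K) + Xw K 0 * Ltr (FreeMonoid.of 0) P
      + Xw K 1 * Ltr (FreeMonoid.of 1) P := by
  classical
  apply MonoidAlgebra.ext
  apply Finsupp.ext
  intro z
  rw [MonoidAlgebra.coeff_add, MonoidAlgebra.coeff_add, Finsupp.add_apply, Finsupp.add_apply]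
  induction z using FreeMonoid.recOn with
  | one =>
      have e0 : ∀ i : Fin 2, (Xw K i * Ltr (FreeMonoid.of i) P).coeff 1 = 0 := by
        intro i
        rw [Xw_eq_single]
        exact mul_apply_short _ _ 1 (supp_single_len _ _) 1 (by norm_num [lenW])
      rw [e0 0, e0 1, MonoidAlgebra.coeff_single, Finsupp.single_eq_same]
      simp
  | of_mul i t _ =>
      have hz : ∀ j : Fin 2, (Xw K j * Ltr (FreeMonoid.of j) P).coeff (FreeMonoid.of i * t)
          = (MonoidAlgebra.single (FreeMonoid.of j) (1:K)).coeff (FreeMonoid.of i)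
            * P.coeff (FreeMonoid.of j * t) := by
        intro j
        rw [Xw_eq_single]
        have hsplit := mul_apply_split (MonoidAlgebra.single (FreeMonoid.of j) (1:K))
          (Ltr (FreeMonoid.of j) P) 1 (supp_single_len _ _) (FreeMonoid.of i * t)
          (by rw [lenW_mul]; have : lenW (FreeMonoid.of i) = 1 := rfl; omega)
        rw [hsplit]
        have htake : takeW 1 (FreeMonoid.of i * t) = FreeMonoid.of i := by
          have : lenW (FreeMonoid.of i) = 1 := rfl
          rw [← this, takeW_mul_of_len]
        have hdrop : dropW 1 (FreeMonoid.of i * t) = t := by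
          have : lenW (FreeMonoid.of i) = 1 := rfl
          rw [← this, dropW_mul_of_len]
        rw [htake, hdrop, Ltr_apply]
      rw [hz 0, hz 1]
      rw [MonoidAlgebra.coeff_single, MonoidAlgebra.coeff_single, MonoidAlgebra.coeff_single, Finsupp.single_apply, if_neg (single_of_ne_one i t)]
      have : i = 0 ∨ i = 1 := by omega
      rcases this with rfl | rfl
      · rw [Finsupp.single_eq_same,
          Finsupp.single_eq_of_ne (of_ne_of (by decide))]
        simp
      · rw [Finsupp.single_eq_same,
          Finsupp.single_eq_of_ne (of_ne_of (by decide))]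
        simp

/-- From any relation between `f` and `g` we extract a common right-multiple relation. -/
lemma exists_special (f g : FA2 K) (hf : f ≠ 0) (hg : g ≠ 0) (hfe : f.coeff 1 = 0) (hge : g.coeff 1 = 0) :
    ∀ (M : ℕ) (P : FA2 K), P ≠ 0 → subst2 K ![f, g] P = 0 → P.coeff.support.sup lenW ≤ M →
    ∃ h₁ h₂ : FA2 K, h₁ ≠ 0 ∧ h₂ ≠ 0 ∧ f * h₁ = g * h₂ := by
  intro M
  induction M with
  | zero =>
      intro P hP0 hPrel hPsup
      exfalso
      have hsub : P.coeff.support ⊆ {1} := by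
        intro w hw
        have h1 : lenW w ≤ 0 := le_trans (Finset.le_sup hw) hPsup
        have h3 : FreeMonoid.toList w = [] := List.length_eq_zero_iff.mp (Nat.le_zero.mp h1)
        have h2 : w = 1 := congrArg FreeMonoid.ofList h3
        exact Finset.mem_singleton.mpr h2
      have hP1 : P = MonoidAlgebra.single (1:W) (P.coeff 1) := MonoidAlgebra.ext (Finsupp.support_subset_singleton.mp hsub)
      have hP1ne : P.coeff 1 ≠ 0 := by
        intro h
        apply hP0
        rw [hP1, h]
        exact MonoidAlgebra.single_zero _
      have h4 : subst2 K ![f, g] P = MonoidAlgebra.single (1:W) (P.coeff 1) := by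
        conv_lhs => rw [hP1]
        exact subst2_single_one_coeff _ _
      rw [h4] at hPrel
      exact hP1ne (MonoidAlgebra.single_eq_zero.mp hPrel)
  | succ M IH =>
      intro P hP0 hPrel hPsup
      have hsupp : ∀ i : Fin 2, (Ltr (FreeMonoid.of i) P).coeff.support.sup lenW ≤ M := by
        intro i
        apply Finset.sup_le
        intro u hu
        have hm := Ltr_support _ _ _ hu
        have hlen := le_trans (Finset.le_sup (f := lenW) hm) hPsup
        rw [lenW_mul] at hlen
        have : lenW (FreeMonoid.of i) = 1 := rfl
        omega
      have hdec := decomp_first P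
      have hΦ : MonoidAlgebra.single (1:W) (P.coeff 1) + f * subst2 K ![f, g] (Ltr (FreeMonoid.of 0) P)
          + g * subst2 K ![f, g] (Ltr (FreeMonoid.of 1) P) = 0 := by
        have hc := congrArg (subst2 K ![f, g]) hdec
        rw [hPrel, map_add, map_add, map_mul, map_mul, subst2_Xw, subst2_Xw,
          subst2_single_one_coeff] at hc
        simp only [Matrix.cons_val_zero, Matrix.cons_val_one, Matrix.head_cons] at hc
        exact hc.symm
      have hα : P.coeff 1 = 0 := by
        have hone := congrArg (fun Q : FA2 K => Q.coeff 1) hΦ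
        rw [MonoidAlgebra.coeff_add, MonoidAlgebra.coeff_add, Finsupp.add_apply, Finsupp.add_apply, mul_apply_one', mul_apply_one', hfe, hge,
          zero_mul, zero_mul, MonoidAlgebra.coeff_single, Finsupp.single_eq_same] at hone
        simpa using hone
      rw [hα, show (MonoidAlgebra.single (1:W) (0:K)) = 0 from MonoidAlgebra.single_zero _, zero_add] at hΦ
      by_cases h1z : subst2 K ![f, g] (Ltr (FreeMonoid.of 0) P) = 0
      · have h2z : subst2 K ![f, g] (Ltr (FreeMonoid.of 1) P) = 0 := by
          rw [h1z, mul_zero, zero_add] at hΦ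
          rcases mul_eq_zero.mp hΦ with h | h
          · exact absurd h hg
          · exact h
        have hP12 : Ltr (FreeMonoid.of 0) P ≠ 0 ∨ Ltr (FreeMonoid.of 1) P ≠ 0 := by
          by_contra hcon
          push_neg at hcon
          apply hP0
          rw [hdec, hα, hcon.1, hcon.2, mul_zero, mul_zero, add_zero, add_zero]
          exact MonoidAlgebra.single_zero _
        rcases hP12 with h | h
        · exact IH (Ltr (FreeMonoid.of 0) P) h h1z (hsupp 0)
        · exact IH (Ltr (FreeMonoid.of 1) P) h h2z (hsupp 1)
      · have h2z : subst2 K ![f, g] (Ltr (FreeMonoid.of 1) P) ≠ 0 := by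
          intro h
          rw [h, mul_zero, add_zero] at hΦ
          rcases mul_eq_zero.mp hΦ with h | h
          · exact absurd h hf
          · exact absurd h h1z
        refine ⟨subst2 K ![f, g] (Ltr (FreeMonoid.of 0) P),
          -(subst2 K ![f, g] (Ltr (FreeMonoid.of 1) P)), h1z, neg_ne_zero.mpr h2z, ?_⟩
        rw [mul_neg]
        exact eq_neg_of_add_eq_zero_left hΦ

end BFP

namespace BFP

lemma takeW_add (w u : W) (j : ℕ) : takeW (lenW w + j) (w * u) = w * takeW j u := by
  show FreeMonoid.ofList (List.take ((FreeMonoid.toList w).length + j) (((w * u) : W).toList)) = _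
  rw [FreeMonoid.toList_mul, List.take_length_add_append (l₁ := FreeMonoid.toList w) (l₂ := FreeMonoid.toList u) j]
  rfl

lemma dropW_add (w u : W) (j : ℕ) : dropW (lenW w + j) (w * u) = dropW j u := by
  show FreeMonoid.ofList (List.drop ((FreeMonoid.toList w).length + j) (((w * u) : W).toList)) = _
  rw [FreeMonoid.toList_mul, List.drop_length_add_append (l₁ := FreeMonoid.toList w) (l₂ := FreeMonoid.toList u) j]
  rfl

/-- The key factorization: if `f h₁ = g h₂` with everything graded, then `g` divides `f`. -/
lemma factor (f g h₁ h₂ : FA2 K) (n m : ℕ) (hm1 : 1 ≤ m) (hmn : m ≤ n)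
    (hfs : ∀ z ∈ f.coeff.support, lenW z = n) (hgs : ∀ z ∈ g.coeff.support, lenW z = m)
    (hg : g ≠ 0) (hh₁ : h₁ ≠ 0) (hh₂ : h₂ ≠ 0) (heq : f * h₁ = g * h₂) :
    ∃ (w₀ : W) (c : FA2 K), w₀ ∈ g.coeff.support ∧ c ≠ 0 ∧ f = g * c ∧
      (∀ u ∈ c.coeff.support, w₀ * u ∈ f.coeff.support) := by
  classical
  have star : ∀ w : W, lenW w = m → Ltr w f * h₁ = (g.coeff w) • h₂ := by
    intro w hw
    have hfl : ∀ a ∈ (Ltr w f).coeff.support, lenW a = n - m := by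
      intro a ha
      have h2 := hfs _ (Ltr_support _ _ _ ha)
      rw [lenW_mul, hw] at h2
      omega
    apply MonoidAlgebra.ext
    apply Finsupp.ext
    intro u
    have h1 := congrArg (fun Q : FA2 K => Q.coeff (w * u)) heq
    rw [MonoidAlgebra.coeff_smul, Finsupp.smul_apply, smul_eq_mul]
    have hgw : (g * h₂).coeff (w * u) = g.coeff w * h₂.coeff u := by
      rw [mul_apply_split g h₂ m hgs (w*u) (by rw [lenW_mul, hw]; omega)]
      rw [← hw, takeW_mul_of_len, dropW_mul_of_len]
    by_cases hu : n - m ≤ lenW u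
    · rw [mul_apply_split (Ltr w f) h₁ (n-m) hfl u hu]
      rw [mul_apply_split f h₁ n hfs (w*u) (by rw [lenW_mul, hw]; omega)] at h1
      have hnsplit : n = lenW w + (n - m) := by omega
      rw [hnsplit, takeW_add, dropW_add] at h1
      rw [hgw] at h1
      exact h1
    · rw [mul_apply_short (Ltr w f) h₁ (n-m) hfl u (by omega)]
      rw [mul_apply_short f h₁ n hfs (w*u) (by rw [lenW_mul, hw]; omega)] at h1
      rw [hgw] at h1
      exact h1.symm ▸ h1
  obtain ⟨w₀, hw₀⟩ := Finsupp.support_nonempty_iff.mpr (mt MonoidAlgebra.coeff_eq_zero.mp hg)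
  have hgw₀ : g.coeff w₀ ≠ 0 := Finsupp.mem_support_iff.mp hw₀
  have hw₀m : lenW w₀ = m := hgs _ hw₀
  set c₀ := Ltr w₀ f with hc₀def
  have hc₀ : c₀ * h₁ = (g.coeff w₀) • h₂ := star w₀ hw₀m
  have hc₀ne : c₀ ≠ 0 := by
    intro h
    rw [h, zero_mul] at hc₀
    exact smul_ne_zero hgw₀ hh₂ hc₀.symm
  have hLtr : ∀ w : W, lenW w = m → Ltr w f = (g.coeff w * (g.coeff w₀)⁻¹) • c₀ := by
    intro w hw
    have h2 : (Ltr w f - (g.coeff w * (g.coeff w₀)⁻¹) • c₀) * h₁ = 0 := by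
      rw [sub_mul, smul_mul_assoc, hc₀, star w hw, smul_smul]
      rw [mul_assoc, inv_mul_cancel₀ hgw₀, mul_one, sub_self]
    rcases mul_eq_zero.mp h2 with h3 | h3
    · exact sub_eq_zero.mp h3
    · exact absurd h3 hh₁
  refine ⟨w₀, (g.coeff w₀)⁻¹ • c₀, hw₀, smul_ne_zero (inv_ne_zero hgw₀) hc₀ne, ?_, ?_⟩
  · apply MonoidAlgebra.ext
    apply Finsupp.ext
    intro z
    by_cases hz : m ≤ lenW z
    · rw [mul_apply_split g _ m hgs z hz]
      have hzdec : f.coeff z = (Ltr (takeW m z) f).coeff (dropW m z) := by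
        rw [Ltr_apply, takeW_mul_dropW]
      rw [hzdec, hLtr (takeW m z) (lenW_takeW m z hz)]
      rw [MonoidAlgebra.coeff_smul, MonoidAlgebra.coeff_smul, Finsupp.smul_apply, Finsupp.smul_apply, smul_eq_mul, smul_eq_mul]
      rw [hc₀def, Ltr_apply]
      ring
    · rw [mul_apply_short g _ m hgs z (by omega)]
      by_contra hfz
      have : z ∈ f.coeff.support := Finsupp.mem_support_iff.mpr (fun h => hfz (by rw [h]))
      have := hfs _ this
      omega
  · intro u hu
    have : c₀.coeff u ≠ 0 := by
      have := Finsupp.mem_support_iff.mp hu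
      rw [MonoidAlgebra.coeff_smul, Finsupp.smul_apply, smul_eq_mul] at this
      intro h
      exact this (by rw [h, mul_zero])
    rw [hc₀def, Ltr_apply] at this
    exact Finsupp.mem_support_iff.mpr this

end BFP

namespace BFP

lemma length_eq_counts (l : List (Fin 2)) : l.length = l.count 0 + l.count 1 := by
  induction l with
  | nil => simp
  | cons i t ih =>
      have : i = 0 ∨ i = 1 := by omega
      rcases this with rfl | rfl <;>
        simp [List.count_cons, ih] <;> omega

lemma single_one_eq_smul (c : K) : (MonoidAlgebra.single (1:W) c : FA2 K) = c • 1 := by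
  rw [MonoidAlgebra.one_def, MonoidAlgebra.smul_single, smul_eq_mul, mul_one]

lemma eq_scalar (f : FA2 K) (h0 : ∀ w ∈ f.coeff.support, lenW w = 0) :
    f = MonoidAlgebra.single (1:W) (f.coeff 1) := by
  apply MonoidAlgebra.ext
  apply Finsupp.support_subset_singleton.mp
  intro w hw
  have h1 : lenW w = 0 := h0 w hw
  have h3 : FreeMonoid.toList w = [] := List.length_eq_zero_iff.mp h1
  have h2 : w = 1 := congrArg FreeMonoid.ofList h3
  exact Finset.mem_singleton.mpr h2

/-- Transfer of a relation under swapping the two elements. -/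
lemma rel_swap (f g : FA2 K) (h : ∃ P : FA2 K, P ≠ 0 ∧ subst2 K ![f, g] P = 0) :
    ∃ P : FA2 K, P ≠ 0 ∧ subst2 K ![g, f] P = 0 := by
  obtain ⟨P, hP0, hPrel⟩ := h
  set sw := subst2 K ![Xw K 1, Xw K 0] with hswdef
  have hcomp : (subst2 K ![g, f]).comp sw = subst2 K ![f, g] := by
    apply algHom_ext2 <;>
      simp [hswdef, AlgHom.comp_apply, subst2_Xw]
  have hinvol : sw.comp sw = AlgHom.id K (FA2 K) := by
    apply algHom_ext2 <;>
      simp [hswdef, AlgHom.comp_apply, subst2_Xw]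
  refine ⟨sw P, ?_, ?_⟩
  · intro h
    have h2 : sw (sw P) = P := by
      have := congrArg (fun φ : FA2 K →ₐ[K] FA2 K => φ P) hinvol
      simpa using this
    rw [h, map_zero] at h2
    exact hP0 h2.symm
  · have := congrArg (fun φ : FA2 K →ₐ[K] FA2 K => φ P) hcomp
    simp only [AlgHom.comp_apply] at this
    rw [this, hPrel]

/-- Transfer of a relation from `(f, g)` to `(g, c)` when `f = g * c`. -/
lemma rel_descend (f g c : FA2 K) (hfgc : f = g * c)
    (h : ∃ P : FA2 K, P ≠ 0 ∧ subst2 K ![f, g] P = 0) :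
    ∃ Q : FA2 K, Q ≠ 0 ∧ subst2 K ![g, c] Q = 0 := by
  obtain ⟨P, hP0, hPrel⟩ := h
  have hXX : (Xw K 0 * Xw K 1 : FA2 K)
      = MonoidAlgebra.single (FreeMonoid.of 0 * FreeMonoid.of 1) 1 := by
    rw [Xw_eq_single, Xw_eq_single, MonoidAlgebra.single_mul_single, one_mul]
  set σ := subst2 K ![MonoidAlgebra.single (FreeMonoid.of 0 * FreeMonoid.of 1) 1,
    MonoidAlgebra.single (FreeMonoid.of 0 : W) 1] with hσdef
  have hσinj : Function.Injective σ := by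
    rw [hσdef]
    have : (MonoidAlgebra.single (FreeMonoid.of (0:Fin 2) : W) (1:K))
        = MonoidAlgebra.single (FreeMonoid.of 0 : W) 1 := rfl
    exact subst2_single_words_injective _ _ psi_injective
  have hcomp : (subst2 K ![g, c]).comp σ = subst2 K ![f, g] := by
    apply algHom_ext2
    · rw [AlgHom.comp_apply, hσdef, subst2_Xw]
      simp only [Matrix.cons_val_zero]
      rw [← hXX, map_mul]
      simp only [subst2_Xw, Matrix.cons_val_zero, Matrix.cons_val_one, Matrix.head_cons]
      exact hfgc.symm
    · rw [AlgHom.comp_apply, hσdef, subst2_Xw]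
      simp only [Matrix.cons_val_one, Matrix.head_cons]
      rw [← Xw_eq_single]
      simp only [subst2_Xw, Matrix.cons_val_zero, Matrix.cons_val_one, Matrix.head_cons]
  refine ⟨σ P, fun h => hP0 (hσinj (by rw [h, map_zero])), ?_⟩
  have := congrArg (fun φ : FA2 K →ₐ[K] FA2 K => φ P) hcomp
  simp only [AlgHom.comp_apply] at this
  rw [this, hPrel]

/-- The main induction. -/
lemma key : ∀ (N : ℕ) (f g : FA2 K) (a₁ b₁ a₂ b₂ : ℕ), f ≠ 0 → g ≠ 0 →
    (∀ w ∈ f.coeff.support, (FreeMonoid.toList w).count 0 = a₁ ∧ (FreeMonoid.toList w).count 1 = b₁) →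
    (∀ w ∈ g.coeff.support, (FreeMonoid.toList w).count 0 = a₂ ∧ (FreeMonoid.toList w).count 1 = b₂) →
    a₁ + b₁ + a₂ + b₂ ≤ N →
    (∃ P : FA2 K, P ≠ 0 ∧ subst2 K ![f, g] P = 0) →
    ∃ (w : FA2 K) (α β : K) (k l : ℕ), IsBihom K w ∧ α ≠ 0 ∧ β ≠ 0 ∧
      f = α • w ^ k ∧ g = β • w ^ l := by
  have scalarf : ∀ (f g : FA2 K) (a₂ b₂ : ℕ), f ≠ 0 →
      (∀ w ∈ g.coeff.support, (FreeMonoid.toList w).count 0 = a₂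
        ∧ (FreeMonoid.toList w).count 1 = b₂) →
      (∀ w ∈ f.coeff.support, lenW w = 0) →
      ∃ (w : FA2 K) (α β : K) (k l : ℕ), IsBihom K w ∧ α ≠ 0 ∧ β ≠ 0 ∧
        f = α • w ^ k ∧ g = β • w ^ l := by
    intro f g a₂ b₂ hf hgc h0
    have hf1 : f = MonoidAlgebra.single (1:W) (f.coeff 1) := eq_scalar f h0
    have hf1ne : f.coeff 1 ≠ 0 := by
      intro h
      apply hf
      rw [hf1, h]
      exact MonoidAlgebra.single_zero _
    exact ⟨g, f.coeff 1, 1, 0, 1, ⟨a₂, b₂, hgc⟩, hf1ne, one_ne_zero,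
      by rw [pow_zero, ← single_one_eq_smul, ← hf1],
      by rw [pow_one, one_smul]⟩
  -- the core step, assuming deg f ≥ deg g ≥ 1
  have step : ∀ (N : ℕ),
      (∀ (f g : FA2 K) (a₁ b₁ a₂ b₂ : ℕ), f ≠ 0 → g ≠ 0 →
        (∀ w ∈ f.coeff.support, (FreeMonoid.toList w).count 0 = a₁
          ∧ (FreeMonoid.toList w).count 1 = b₁) →
        (∀ w ∈ g.coeff.support, (FreeMonoid.toList w).count 0 = a₂
          ∧ (FreeMonoid.toList w).count 1 = b₂) →
        a₁ + b₁ + a₂ + b₂ ≤ N →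
        (∃ P : FA2 K, P ≠ 0 ∧ subst2 K ![f, g] P = 0) →
        ∃ (w : FA2 K) (α β : K) (k l : ℕ), IsBihom K w ∧ α ≠ 0 ∧ β ≠ 0 ∧
          f = α • w ^ k ∧ g = β • w ^ l) →
      ∀ (f g : FA2 K) (a₁ b₁ a₂ b₂ : ℕ), f ≠ 0 → g ≠ 0 →
        (∀ w ∈ f.coeff.support, (FreeMonoid.toList w).count 0 = a₁
          ∧ (FreeMonoid.toList w).count 1 = b₁) →
        (∀ w ∈ g.coeff.support, (FreeMonoid.toList w).count 0 = a₂
          ∧ (FreeMonoid.toList w).count 1 = b₂) →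
        1 ≤ a₂ + b₂ → a₂ + b₂ ≤ a₁ + b₁ → a₁ + b₁ + a₂ + b₂ ≤ N + 1 →
        (∃ P : FA2 K, P ≠ 0 ∧ subst2 K ![f, g] P = 0) →
        ∃ (w : FA2 K) (α β : K) (k l : ℕ), IsBihom K w ∧ α ≠ 0 ∧ β ≠ 0 ∧
          f = α • w ^ k ∧ g = β • w ^ l := by
    intro N IH f g a₁ b₁ a₂ b₂ hf hg hfc hgc hm hmn hsum hrel
    have hfs : ∀ z ∈ f.coeff.support, lenW z = a₁ + b₁ := by
      intro z hz
      have := hfc z hz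
      unfold lenW
      rw [length_eq_counts]
      omega
    have hgs : ∀ z ∈ g.coeff.support, lenW z = a₂ + b₂ := by
      intro z hz
      have := hgc z hz
      unfold lenW
      rw [length_eq_counts]
      omega
    have hfe : f.coeff 1 = 0 := by
      by_contra h
      have := hfs 1 (Finsupp.mem_support_iff.mpr h)
      have h2 : lenW (1:W) = 0 := rfl
      omega
    have hge : g.coeff 1 = 0 := by
      by_contra h
      have := hgs 1 (Finsupp.mem_support_iff.mpr h)
      have h2 : lenW (1:W) = 0 := rfl
      omega
    obtain ⟨P, hP0, hPrel⟩ := hrel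
    obtain ⟨h₁, h₂, hh₁, hh₂, heq⟩ := exists_special f g hf hg hfe hge
      (P.coeff.support.sup lenW) P hP0 hPrel le_rfl
    obtain ⟨w₀, c, hw₀, hc0, hfgc, hcsupp⟩ := factor f g h₁ h₂ (a₁+b₁) (a₂+b₂)
      hm hmn hfs hgs hg hh₁ hh₂ heq
    have hw₀c := hgc w₀ hw₀
    have hccount : ∀ u ∈ c.coeff.support, (FreeMonoid.toList u).count 0 = a₁ - a₂
        ∧ (FreeMonoid.toList u).count 1 = b₁ - b₂ := by
      intro u hu
      have h2 := hfc (w₀ * u) (hcsupp u hu)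
      rw [FreeMonoid.toList_mul, List.count_append, List.count_append] at h2
      omega
    have hle : a₂ ≤ a₁ ∧ b₂ ≤ b₁ := by
      obtain ⟨u, hu⟩ := Finsupp.support_nonempty_iff.mpr (mt MonoidAlgebra.coeff_eq_zero.mp hc0)
      have h2 := hfc (w₀ * u) (hcsupp u hu)
      rw [FreeMonoid.toList_mul, List.count_append, List.count_append] at h2
      omega
    have hrel' := rel_descend f g c hfgc ⟨P, hP0, hPrel⟩
    obtain ⟨w, α, β, k, l, hwbh, hα, hβ, hgw, hcw⟩ :=
      IH g c a₂ b₂ (a₁ - a₂) (b₁ - b₂) hg hc0 hgc hccount (by omega) hrel'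
    refine ⟨w, α * β, α, k + l, k, hwbh, mul_ne_zero hα hβ, hα, ?_, hgw⟩
    rw [hfgc, hgw, hcw, smul_mul_assoc, mul_smul_comm, pow_add, smul_smul]
  intro N
  induction N with
  | zero =>
      intro f g a₁ b₁ a₂ b₂ hf hg hfc hgc hsum hrel
      apply scalarf f g a₂ b₂ hf hgc
      intro z hz
      have := hfc z hz
      unfold lenW
      rw [length_eq_counts]
      omega
  | succ N IH =>
      intro f g a₁ b₁ a₂ b₂ hf hg hfc hgc hsum hrel
      by_cases hn : a₁ + b₁ = 0
      · apply scalarf f g a₂ b₂ hf hgc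
        intro z hz
        have := hfc z hz
        unfold lenW
        rw [length_eq_counts]
        omega
      · by_cases hm : a₂ + b₂ = 0
        · -- g is a scalar
          have hg1 : g = MonoidAlgebra.single (1:W) (g.coeff 1) := by
            apply eq_scalar
            intro z hz
            have := hgc z hz
            unfold lenW
            rw [length_eq_counts]
            omega
          have hg1ne : g.coeff 1 ≠ 0 := by
            intro h
            apply hg
            rw [hg1, h]
            exact MonoidAlgebra.single_zero _
          exact ⟨f, 1, g.coeff 1, 1, 0, ⟨a₁, b₁, hfc⟩, one_ne_zero, hg1ne,
            by rw [pow_one, one_smul],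
            by rw [pow_zero, ← single_one_eq_smul, ← hg1]⟩
        · by_cases hcmp : a₂ + b₂ ≤ a₁ + b₁
          · exact step N IH f g a₁ b₁ a₂ b₂ hf hg hfc hgc (by omega) hcmp (by omega) hrel
          · obtain ⟨w, α, β, k, l, hwbh, hα, hβ, hgw, hfw⟩ :=
              step N IH g f a₂ b₂ a₁ b₁ hg hf hgc hfc (by omega) (by omega) (by omega)
                (rel_swap f g hrel)
            exact ⟨w, β, α, l, k, hwbh, hβ, hα, hfw, hgw⟩

end BFP


variable (K)

/-- Two nonzero bihomogeneous polynomials `f, g ∈ K⟨x,y⟩` either generate a free subalgebra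
(the homomorphism `K⟨u,v⟩ → K⟨x,y⟩`, `u ↦ f`, `v ↦ g`, is injective), or, up to
multiplicative constants, both are powers of one and the same bihomogeneous element. -/
theorem bihom_free_or_powers (f g : FA2 K) (hf : f ≠ 0) (hg : g ≠ 0)
    (hfh : IsBihom K f) (hgh : IsBihom K g) :
    Function.Injective (subst2 K ![f, g]) ∨
    ∃ (w : FA2 K) (α β : K) (k l : ℕ), IsBihom K w ∧ α ≠ 0 ∧ β ≠ 0 ∧
      f = α • w ^ k ∧ g = β • w ^ l := by
  by_cases hinj : Function.Injective (subst2 K ![f, g])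
  · exact Or.inl hinj
  · right
    rw [Function.not_injective_iff] at hinj
    obtain ⟨P, Q, hPQ, hne⟩ := hinj
    obtain ⟨a₁, b₁, hfc⟩ := hfh
    obtain ⟨a₂, b₂, hgc⟩ := hgh
    exact BFP.key (a₁ + b₁ + a₂ + b₂) f g a₁ b₁ a₂ b₂ hf hg hfc hgc le_rfl
      ⟨P - Q, sub_ne_zero.mpr hne, by rw [map_sub, hPQ, sub_self]⟩
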